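/- (Pre-processing inequality) Suppose finite random variables X, Y, Z form a Markov chain X − Y − Z. Then for all z ∈ supp(P_Z), ℓ(X→z) ≤ ℓ(Y→z), where ℓ(X→z) = log max_{x ∈ supp(P_X)} P_{Z|X=x}(z)/P_Z(z) and ℓ(Y→z) = log max_{y ∈ supp(P_Y)} P_{Z|Y=y}(z)/P_Z(z). -/
import Mathlib


/-- Pre-processing: if X − Y − Z is a Markov chain, then ℓ(X→z) ≤ ℓ(Y→z). -/
theorem stmt_4 {α β γ : Type*} [Fintype α] [Fintype β] [Fintype γ]
    (p : α → β → γ → ℝ)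
    (hp : ∀ x y z, 0 ≤ p x y z)
    (hsum : ∑ x, ∑ y, ∑ z, p x y z = 1)
    (pX : α → ℝ) (hpX : ∀ x, pX x = ∑ y, ∑ z, p x y z)
    (pY : β → ℝ) (hpY : ∀ y, pY y = ∑ x, ∑ z, p x y z)
    (pZ : γ → ℝ) (hpZ : ∀ z, pZ z = ∑ x, ∑ y, p x y z)
    (pXY : α → β → ℝ) (hpXY : ∀ x y, pXY x y = ∑ z, p x y z)
    (pXZ : α → γ → ℝ) (hpXZ : ∀ x z, pXZ x z = ∑ y, p x y z)
    (pYZ : β → γ → ℝ) (hpYZ : ∀ y z, pYZ y z = ∑ x, p x y z)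
    (hmarkov : ∀ x y z, p x y z * pY y = pXY x y * pYZ y z)
    (sX : Finset α) (hsX : ∀ x, x ∈ sX ↔ 0 < pX x) (hneX : sX.Nonempty)
    (sY : Finset β) (hsY : ∀ y, y ∈ sY ↔ 0 < pY y) (hneY : sY.Nonempty)
    (z : γ) (hz : 0 < pZ z) :
    Real.log (sX.sup' hneX fun x => pXZ x z / (pX x * pZ z)) ≤
      Real.log (sY.sup' hneY fun y => pYZ y z / (pY y * pZ z)) := by
  set M := sY.sup' hneY fun y => pYZ y z / (pY y * pZ z) with hM
  have hpXZnn : ∀ x, 0 ≤ pXZ x z := fun x => by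
    rw [hpXZ]; exact Finset.sum_nonneg fun y _ => hp x y z
  have hpYZnn : ∀ y, 0 ≤ pYZ y z := fun y => by
    rw [hpYZ]; exact Finset.sum_nonneg fun x _ => hp x y z
  have hpYnn : ∀ y, 0 ≤ pY y := fun y => by
    rw [hpY]; exact Finset.sum_nonneg fun x _ => Finset.sum_nonneg fun z' _ => hp x y z'
  have hMnn : 0 ≤ M := by
    obtain ⟨y0, hy0⟩ := hneY
    refine le_trans ?_ (Finset.le_sup' _ hy0)
    exact div_nonneg (hpYZnn y0) (mul_nonneg (hpYnn y0) hz.le)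
  -- key bound: pYZ y z ≤ M * (pY y * pZ z) for all y
  have hkey : ∀ y, pYZ y z ≤ M * (pY y * pZ z) := by
    intro y
    rcases lt_or_eq_of_le (hpYnn y) with hy | hy
    · have hmem : y ∈ sY := (hsY y).2 hy
      have := Finset.le_sup' (fun y => pYZ y z / (pY y * pZ z)) hmem
      rw [div_le_iff₀ (mul_pos hy hz)] at this
      linarith
    · have hzero : pYZ y z = 0 := by
        have hle : pYZ y z ≤ pY y := by
          rw [hpYZ, hpY]
          refine Finset.sum_le_sum fun x _ => ?_
          exact Finset.single_le_sum (fun z' _ => hp x y z') (Finset.mem_univ z)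
        linarith [hpYZnn y]
      rw [hzero, ← hy]
      positivity
  -- each x in supp X has ratio ≤ M
  have hbound : ∀ x ∈ sX, pXZ x z / (pX x * pZ z) ≤ M := by
    intro x hx
    have hpx : 0 < pX x := (hsX x).1 hx
    rw [div_le_iff₀ (mul_pos hpx hz)]
    have h1 : pXZ x z ≤ ∑ y, pXY x y * (M * pZ z) := by
      rw [hpXZ]
      refine Finset.sum_le_sum fun y _ => ?_
      rcases lt_or_eq_of_le (hpYnn y) with hy | hy
      · have := hmarkov x y z
        have h2 : pXY x y * pYZ y z ≤ pXY x y * (M * (pY y * pZ z)) := by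
          refine mul_le_mul_of_nonneg_left (hkey y) ?_
          rw [hpXY]; exact Finset.sum_nonneg fun z' _ => hp x y z'
        nlinarith
      · have : p x y z = 0 := by
          have hle : p x y z ≤ pY y := by
            rw [hpY]
            calc p x y z ≤ ∑ z', p x y z' :=
                  Finset.single_le_sum (fun z' _ => hp x y z') (Finset.mem_univ z)
              _ ≤ ∑ x', ∑ z', p x' y z' :=
                  Finset.single_le_sum
                    (fun x' _ => Finset.sum_nonneg fun z' _ => hp x' y z')
                    (Finset.mem_univ x)
          have := hp x y z
          linarith
        rw [this]
        have : 0 ≤ pXY x y := by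
          rw [hpXY]; exact Finset.sum_nonneg fun z' _ => hp x y z'
        positivity
    have h3 : ∑ y, pXY x y * (M * pZ z) = pX x * (M * pZ z) := by
      rw [← Finset.sum_mul, hpX]
      congr 1
      exact Finset.sum_congr rfl fun y _ => hpXY x y
    calc pXZ x z ≤ pX x * (M * pZ z) := h1.trans_eq h3
      _ = M * (pX x * pZ z) := by ring
  have hsup : (sX.sup' hneX fun x => pXZ x z / (pX x * pZ z)) ≤ M :=
    Finset.sup'_le _ _ hbound
  -- positivity of LHS sup
  have hposL : 0 < sX.sup' hneX fun x => pXZ x z / (pX x * pZ z) := by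
    have hsumZ : ∑ x, pXZ x z = pZ z := by
      rw [hpZ]
      exact Finset.sum_congr rfl fun x _ => hpXZ x z
    have hex : ∃ x0, 0 < pXZ x0 z := by
      by_contra h
      push_neg at h
      have : ∀ x, pXZ x z = 0 := fun x => le_antisymm (h x) (hpXZnn x)
      have : (∑ x, pXZ x z) = 0 := Finset.sum_eq_zero fun x _ => this x
      rw [hsumZ] at this
      linarith
    obtain ⟨x0, hx0⟩ := hex
    have hpx0 : 0 < pX x0 := by
      have : pXZ x0 z ≤ pX x0 := by
        rw [hpX, hpXZ]
        refine Finset.sum_le_sum fun y _ => ?_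
        exact Finset.single_le_sum (fun z' _ => hp x0 y z') (Finset.mem_univ z)
      linarith
    have hmem : x0 ∈ sX := (hsX x0).2 hpx0
    refine lt_of_lt_of_le ?_ (Finset.le_sup' _ hmem)
    exact div_pos hx0 (mul_pos hpx0 hz)
  exact Real.log_le_log hposL hsup
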